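/- The blurred-and-saturated detector is SWAP-invariant: for every ρ ∈ L(ℂ²⊗ℂ²), Λ_BnS(U_swap ρ U_swap†) = Λ_BnS(ρ). Consequently, the identity channel on L(ℂ²) is an emergent dynamics making the coarse-graining diagram commute for the SWAP microscopic evolution: id ∘ Λ_BnS = Λ_BnS ∘ U_swap(·)U_swap†. -/
import Mathlib


open Matrix

noncomputable section

/-- `1/√3` as a complex number. -/
def c3 : ℂ := ((Real.sqrt 3 : ℝ) : ℂ)⁻¹

/-- The four Kraus operators of the blurred-and-saturated detector. -/
def K : Fin 4 → Matrix (Fin 2) (Fin 4) ℂ :=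
  ![!![1, 0, 0, 0; 0, c3, c3, c3],
    !![0, 0, 0, 0; 0, c3, 0, -c3],
    !![0, 0, 0, 0; 0, c3, -c3, 0],
    !![0, 0, 0, 0; 0, 0, c3, -c3]]

/-- The blurred-and-saturated detector coarse-graining map. -/
def ΛBnS (ρ : Matrix (Fin 4) (Fin 4) ℂ) : Matrix (Fin 2) (Fin 2) ℂ :=
  ∑ i, K i * ρ * (K i)ᴴ

/-- The SWAP unitary on `ℂ²⊗ℂ²` in the computational basis `|00⟩,|01⟩,|10⟩,|11⟩`. -/
def Uswap4 : Matrix (Fin 4) (Fin 4) ℂ :=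
  !![1, 0, 0, 0; 0, 0, 1, 0; 0, 1, 0, 0; 0, 0, 0, 1]

set_option maxHeartbeats 2000000 in
lemma bns_main (ρ : Matrix (Fin 4) (Fin 4) ℂ) :
    ΛBnS (Uswap4 * ρ * Uswap4ᴴ) = ΛBnS ρ := by
  ext i j
  fin_cases i <;> fin_cases j <;>
    simp [ΛBnS, K, Uswap4, Matrix.mul_apply, Fin.sum_univ_four,
      Matrix.conjTranspose_apply, Matrix.vecMul, dotProduct, Matrix.vecHead, Matrix.vecTail] <;> ring

/-- the blurred-and-saturated detector is SWAP-invariant. -/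
theorem bns_swap_invariant :
    (∀ ρ : Matrix (Fin 4) (Fin 4) ℂ, ΛBnS (Uswap4 * ρ * Uswap4ᴴ) = ΛBnS ρ) ∧
      (id ∘ ΛBnS) = (fun ρ => ΛBnS (Uswap4 * ρ * Uswap4ᴴ)) := by
  refine ⟨bns_main, ?_⟩
  funext ρ
  simp [bns_main ρ]
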